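/- For all n ≥ 1, the total number of right steps in all dispersed Dyck paths of length n is R(n) = 2^n − C(n, ⌊n/2⌋). -/

import Mathlib

inductive DStep | up | down | right
deriving DecidableEq, Repr

instance : Fintype DStep :=
  ⟨⟨{DStep.up, DStep.down, DStep.right}, by decide⟩, fun x => by cases x <;> decide⟩

/-- Run a dispersed Dyck path from height `h`; `none` if an illegal step occurs,
otherwise the final height. Down steps require positive height; right steps require height 0. -/
def DStep.run : ℕ → List DStep → Option ℕ
  | h, [] => some h
  | h, .up :: l => DStep.run (h + 1) l
  | h + 1, .down :: l => DStep.run h l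
  | 0, .down :: _ => none
  | 0, .right :: l => DStep.run 0 l
  | _ + 1, .right :: _ => none

/-- A dispersed Dyck path: starts and ends at height 0, all steps legal. -/
def IsDDP (l : List DStep) : Prop := DStep.run 0 l = some 0

instance : DecidablePred IsDDP := fun l => by unfold IsDDP; infer_instance

/-- The finset of all dispersed Dyck paths of length `n`. -/
def DDPs (n : ℕ) : Finset (List.Vector DStep n) :=
  Finset.univ.filter (fun v => IsDDP v.toList)

/-- Number of dispersed Dyck paths of length `n`. -/
def dD (n : ℕ) : ℕ := (DDPs n).card

/-- Total number of up steps over all DDPs of length `n`. -/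
def U (n : ℕ) : ℕ := ∑ v ∈ DDPs n, v.toList.count DStep.up

/-- Total number of down steps over all DDPs of length `n`. -/
def D (n : ℕ) : ℕ := ∑ v ∈ DDPs n, v.toList.count DStep.down

/-- Total number of right steps over all DDPs of length `n`. -/
def R (n : ℕ) : ℕ := ∑ v ∈ DDPs n, v.toList.count DStep.right

/-- `i` is the position of a 1-ascent in `l`: an up step with no adjacent up step. -/
def IsOneAscentAt (l : List DStep) (i : ℕ) : Prop :=
  l[i]? = some .up ∧ l[i + 1]? ≠ some .up ∧ (i = 0 ∨ l[i - 1]? ≠ some .up)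

instance (l : List DStep) : DecidablePred (IsOneAscentAt l) := fun i => by
  unfold IsOneAscentAt; infer_instance

/-- Number of 1-ascents in `l`. -/
def oneAsc (l : List DStep) : ℕ :=
  ((Finset.range l.length).filter (IsOneAscentAt l)).card

/-- Total number of 1-ascents over all DDPs of length `n`. -/
def A (n : ℕ) : ℕ := ∑ v ∈ DDPs n, oneAsc v.toList

/-- Signed final height of a plain path (ignoring any right steps). -/
def psum : List DStep → ℤ
  | [] => 0
  | .up :: l => 1 + psum l
  | .down :: l => -1 + psum l
  | .right :: l => psum l

/-! ### Auxiliary development -/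

lemma run_up (h : ℕ) (l : List DStep) : DStep.run h (.up :: l) = DStep.run (h+1) l := by
  cases h <;> rfl

lemma run_down (h : ℕ) (l : List DStep) : DStep.run (h+1) (.down :: l) = DStep.run h l := rfl
lemma run_right0 (l : List DStep) : DStep.run 0 (.right :: l) = DStep.run 0 l := rfl
lemma run_down0 (l : List DStep) : DStep.run 0 (.down :: l) = none := rfl
lemma run_right_pos (h : ℕ) (l : List DStep) : DStep.run (h+1) (.right :: l) = none := rfl

lemma dstep_sum {M : Type*} [AddCommMonoid M] (f : DStep → M) :
    ∑ a : DStep, f a = f .up + f .down + f .right := by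
  rw [show (Finset.univ : Finset DStep) = {.up, .down, .right} by decide]
  simp [Finset.sum_insert, add_assoc]

def consEquiv (n : ℕ) : DStep × List.Vector DStep n ≃ List.Vector DStep (n+1) where
  toFun p := p.1 ::ᵥ p.2
  invFun v := (v.head, v.tail)
  left_inv := fun (a, w) => by simp
  right_inv := fun v => by simp

lemma sum_vector_succ {M : Type*} [AddCommMonoid M] (n : ℕ) (f : List DStep → M) :
    ∑ v : List.Vector DStep (n+1), f v.toList
      = ∑ a : DStep, ∑ w : List.Vector DStep n, f (a :: w.toList) := by
  rw [← Equiv.sum_comp (consEquiv n) (fun v => f v.toList), Fintype.sum_prod_type]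
  apply Finset.sum_congr rfl; intro a _
  apply Finset.sum_congr rfl; intro w _
  simp [consEquiv]

/-- Number of legal paths of length `n` from height `h` ending at height 0. -/
def Fc : ℕ → ℕ → ℕ
  | h, 0 => if h = 0 then 1 else 0
  | 0, n+1 => Fc 1 n + Fc 0 n
  | h+1, n+1 => Fc (h+2) n + Fc h n

/-- Total number of right steps over those paths. -/
def Gc : ℕ → ℕ → ℕ
  | _, 0 => 0
  | 0, n+1 => Gc 1 n + (Gc 0 n + Fc 0 n)
  | h+1, n+1 => Gc (h+2) n + Gc h n

def FS (h n : ℕ) : ℕ :=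
  ∑ v : List.Vector DStep n, if DStep.run h v.toList = some 0 then 1 else 0

def GS (h n : ℕ) : ℕ :=
  ∑ v : List.Vector DStep n,
    if DStep.run h v.toList = some 0 then v.toList.count DStep.right else 0

lemma FS_eq : ∀ n h, FS h n = Fc h n := by
  intro n
  induction n with
  | zero =>
    intro h
    simp only [FS, Fc]
    rw [Finset.sum_eq_single (List.Vector.nil)]
    · have : (List.Vector.nil : List.Vector DStep 0).toList = [] := rfl
      rw [this]; simp [DStep.run]
    · intro b _ hb; exact absurd (List.Vector.eq_nil b) hb
    · intro hb; exact absurd (Finset.mem_univ _) hb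
  | succ n ih =>
    intro h
    rw [FS, sum_vector_succ n (fun l => if DStep.run h l = some 0 then 1 else 0), dstep_sum]
    match h with
    | 0 =>
      simp only [run_up, run_right0, run_down0]
      show (FS 1 n) + (∑ _w : List.Vector DStep n, if (none : Option ℕ) = some 0 then 1 else 0) + FS 0 n = _
      simp only [reduceCtorEq, if_false, Finset.sum_const_zero, add_zero]
      rw [ih 1, ih 0, Fc]
    | h+1 =>
      simp only [run_up, run_down, run_right_pos]
      show (FS (h+2) n) + (FS h n) + (∑ _w : List.Vector DStep n, if (none : Option ℕ) = some 0 then 1 else 0) = _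
      simp only [reduceCtorEq, if_false, Finset.sum_const_zero, add_zero]
      rw [ih (h+2), ih h, Fc]

lemma GS_eq : ∀ n h, GS h n = Gc h n := by
  intro n
  induction n with
  | zero =>
    intro h
    simp only [GS, Gc]
    apply Finset.sum_eq_zero
    intro v _
    have : v.toList = [] := by
      have := List.Vector.eq_nil v; subst this; rfl
    rw [this]; simp
  | succ n ih =>
    intro h
    rw [GS, sum_vector_succ n (fun l => if DStep.run h l = some 0 then l.count DStep.right else 0), dstep_sum]
    have hcount : ∀ (a : DStep) (l : List DStep),
        (a :: l).count DStep.right = l.count DStep.right + if a = .right then 1 else 0 := by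
      intro a l
      rcases a <;> simp [List.count_cons]
    match h with
    | 0 =>
      simp only [run_up, run_right0, run_down0, hcount]
      show (∑ w : List.Vector DStep n, if DStep.run 1 w.toList = some 0 then
              w.toList.count DStep.right + 0 else 0)
          + (∑ _w : List.Vector DStep n, if (none : Option ℕ) = some 0 then _ else 0)
          + (∑ w : List.Vector DStep n, if DStep.run 0 w.toList = some 0 then
              w.toList.count DStep.right + 1 else 0) = _
      simp only [reduceCtorEq, if_false, Finset.sum_const_zero, add_zero]
      have split : (∑ w : List.Vector DStep n, if DStep.run 0 w.toList = some 0 then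
              w.toList.count DStep.right + 1 else 0) = GS 0 n + FS 0 n := by
        rw [GS, FS, ← Finset.sum_add_distrib]
        apply Finset.sum_congr rfl
        intro w _
        split <;> simp
      rw [split]
      show GS 1 n + (GS 0 n + FS 0 n) = Gc 0 (n+1)
      rw [ih 1, ih 0, FS_eq, Gc]
    | h+1 =>
      simp only [run_up, run_down, run_right_pos, hcount]
      show (∑ w : List.Vector DStep n, if DStep.run (h+2) w.toList = some 0 then
              w.toList.count DStep.right + 0 else 0)
          + (∑ w : List.Vector DStep n, if DStep.run h w.toList = some 0 then
              w.toList.count DStep.right + 0 else 0)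
          + (∑ _w : List.Vector DStep n, if (none : Option ℕ) = some 0 then _ else 0) = _
      simp only [reduceCtorEq, if_false, Finset.sum_const_zero, add_zero]
      show GS (h+2) n + GS h n = Gc (h+1) (n+1)
      rw [ih (h+2), ih h, Gc]

lemma Fc_val : ∀ n h, Fc h n = if h ≤ n then n.choose ((n - h) / 2) else 0 := by
  intro n
  induction n with
  | zero =>
    intro h
    match h with
    | 0 => rfl
    | h+1 => simp [Fc]
  | succ n ih =>
    intro h
    match h with
    | 0 =>
      show Fc 1 n + Fc 0 n = _
      rw [ih 1, ih 0]
      simp only [Nat.zero_le, if_true, Nat.le_refl, Nat.sub_zero]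
      match n with
      | 0 => simp
      | m+1 =>
        simp only [show 1 ≤ m + 1 by omega, if_true]
        have hm : m + 1 - 1 = m := by omega
        rw [hm]
        rcases Nat.even_or_odd m with ⟨k, hk⟩ | ⟨k, hk⟩
        · subst hk
          have e1 : (k + k) / 2 = k := by omega
          have e2 : (k + k + 1) / 2 = k := by omega
          have e3 : (k + k + 1 + 1) / 2 = k + 1 := by omega
          rw [e1, e2, e3, Nat.choose_succ_succ (k+k+1) k]
          have symm : (k + k + 1).choose (k + 1) = (k + k + 1).choose k := by
            have := Nat.choose_symm (n := k + k + 1) (k := k) (by omega)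
            simpa [show k + k + 1 - k = k + 1 by omega] using this
          simp only [Nat.succ_eq_add_one]
          omega
        · subst hk
          have e1 : (2 * k + 1) / 2 = k := by omega
          have e2 : (2 * k + 1 + 1) / 2 = k + 1 := by omega
          have e3 : (2 * k + 1 + 1 + 1) / 2 = k + 1 := by omega
          rw [e1, e2, e3, Nat.choose_succ_succ (2*k+1+1) k]
    | h+1 =>
      show Fc (h+2) n + Fc h n = _
      rw [ih (h+2), ih h]
      by_cases hhn : h ≤ n
      · simp only [show (h + 1 ≤ n + 1) by omega, if_true, hhn]
        by_cases hh2 : h + 2 ≤ n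
        · simp only [hh2, if_true]
          have e0 : n + 1 - (h + 1) = n - h := by omega
          obtain ⟨j, hj⟩ : ∃ j, (n - h) / 2 = j + 1 := ⟨(n-h)/2 - 1, by omega⟩
          have e1 : (n - (h + 2)) / 2 = j := by omega
          rw [e0, e1, hj, Nat.choose_succ_succ n j]
        · simp only [hh2, if_false, Nat.zero_add]
          have e1 : (n - h) / 2 = 0 := by omega
          have e2 : (n + 1 - (h + 1)) / 2 = 0 := by omega
          rw [e1, e2]; simp
      · simp only [show ¬ (h + 2 ≤ n) by omega, show ¬ (h + 1 ≤ n + 1) by omega,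
          hhn, if_false]

lemma Fc_big {n h : ℕ} (hh : n < h) : Fc h n = 0 := by
  rw [Fc_val]; simp [Nat.not_le.mpr hh]

lemma sum_Fc : ∀ n, ∑ h ∈ Finset.range (n+1), Fc h n = 2 ^ n := by
  intro n
  induction n with
  | zero => simp [Fc]
  | succ n ih =>
    rw [Finset.sum_range_succ' (fun h => Fc h (n+1)) (n+1)]
    have step : ∀ h, Fc (h+1) (n+1) = Fc (h+1+1) n + Fc h n := fun h => rfl
    have step0 : Fc 0 (n+1) = Fc 1 n + Fc 0 n := rfl
    simp only [step, step0]
    rw [Finset.sum_add_distrib, ih]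
    have h1 := Finset.sum_range_succ' (fun h => Fc h n) (n+2)
    have h2 := Finset.sum_range_succ' (fun h => Fc (h+1) n) (n+1)
    have h3 : ∑ h ∈ Finset.range (n+2+1), Fc h n = 2 ^ n := by
      rw [Finset.sum_range_succ, Finset.sum_range_succ, Fc_big (by omega), Fc_big (by omega), ih]
      omega
    simp only [Nat.zero_add, show n+1+1 = n+2 from rfl] at h2
    have : 2 ^ (n+1) = 2 ^ n + 2 ^ n := by ring
    omega

lemma shiftIco (a b : ℕ) (f : ℕ → ℕ) :
    ∑ j ∈ Finset.Ico (a+1) (b+1), f j = ∑ j ∈ Finset.Ico a b, f (j+1) := by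
  rw [← Finset.map_add_right_Ico a b 1, Finset.sum_map]
  rfl

lemma Gc_val : ∀ n h K, n + 1 ≤ K → Gc h n = ∑ j ∈ Finset.Ico (h+1) K, Fc j n := by
  intro n
  induction n with
  | zero =>
    intro h K _
    rw [show Gc h 0 = 0 by cases h <;> rfl]
    symm
    apply Finset.sum_eq_zero
    intro j hj
    have := (Finset.mem_Ico.mp hj).1
    exact Fc_big (by omega)
  | succ n ih =>
    intro h K hK
    have expand : ∑ j ∈ Finset.Ico (h+1) K, Fc j (n+1)
        = (∑ j ∈ Finset.Ico (h+1) K, Fc (j+1) n) + ∑ j ∈ Finset.Ico (h+1) K, Fc (j-1) n := by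
      rw [← Finset.sum_add_distrib]
      apply Finset.sum_congr rfl
      intro j hj
      have hj1 : 1 ≤ j := le_trans (by omega) (Finset.mem_Ico.mp hj).1
      obtain ⟨m, rfl⟩ : ∃ m, j = m + 1 := ⟨j - 1, by omega⟩
      rfl
    have s1 : ∑ j ∈ Finset.Ico (h+1) K, Fc (j+1) n = ∑ j ∈ Finset.Ico (h+2) (K+1), Fc j n := by
      rw [show h + 2 = (h+1)+1 from rfl, shiftIco (h+1) K (fun j => Fc j n)]
    have s2 : ∑ j ∈ Finset.Ico (h+1) K, Fc (j-1) n = ∑ j ∈ Finset.Ico h (K-1), Fc j n := by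
      rw [show K = (K-1)+1 by omega, shiftIco h (K-1) (fun j => Fc (j-1) n)]
      simp
    match h with
    | 0 =>
      rw [show Gc 0 (n+1) = Gc 1 n + (Gc 0 n + Fc 0 n) from rfl, expand, s1, s2,
        ih 1 (K+1) (by omega), ih 0 (K-1) (by omega),
        Finset.sum_eq_sum_Ico_succ_bot (show 0 < K - 1 by omega) (fun j => Fc j n)]
      ring
    | h+1 =>
      rw [show Gc (h+1) (n+1) = Gc (h+2) n + Gc h n from rfl, expand, s1, s2,
        ih (h+2) (K+1) (by omega), ih h (K-1) (by omega)]

/-- For `n ≥ 1`, the total number of right steps in all DDPs of length `n` is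
`2^n − C(n, ⌊n/2⌋)`. -/
theorem right_closed (n : ℕ) (hn : 1 ≤ n) : R n = 2 ^ n - n.choose (n / 2) := by
  have hR : R n = GS 0 n := by
    rw [R, DDPs, Finset.sum_filter, GS]
    apply Finset.sum_congr rfl
    intro v _
    by_cases hv : DStep.run 0 v.toList = some 0 <;> simp [IsDDP, hv]
  have key : GS 0 n + Fc 0 n = 2 ^ n := by
    rw [GS_eq, Gc_val n 0 (n+1) le_rfl]
    have h2 := sum_Fc n
    rw [Finset.range_eq_Ico,
      Finset.sum_eq_sum_Ico_succ_bot (by omega) (fun j => Fc j n)] at h2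
    omega
  have hF0 : Fc 0 n = n.choose (n / 2) := by rw [Fc_val]; simp
  omega
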